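/- Let κ ≥ 1 and let ν = (ν₁,...,νₙ) be a sequence of nonzero integers with Σᵢ|νᵢ| = κ, Σᵢνᵢ = κ, and n ≥ 2. If ν' = (ν'₁,...,ν'ₙ) is a sequence of nonzero integers with Σᵢ|ν'ᵢ| = κ, Σᵢν'ᵢ = -κ, n ≥ 2, and νᵢ ≡ ν'ᵢ (mod κ) for all i, then n = 2 and ν' = (ν₁-κ, ν₂-κ). -/

import Mathlib

private lemma sum_map_sub' {α : Type*} (f g : α → ℤ) :
    ∀ (l : List α), (l.map (fun x => f x - g x)).sum = (l.map f).sum - (l.map g).sum := by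
  intro l
  induction l with
  | nil => simp
  | cons a t ih => simp [ih]; ring

private lemma all_zero_of_sum_zero :
    ∀ (l : List ℤ), (∀ x ∈ l, 0 ≤ x) → l.sum = 0 → ∀ x ∈ l, x = 0 := by
  intro l
  induction l with
  | nil => simp
  | cons a t ih =>
    intro h hs x hx
    have ha : 0 ≤ a := h a (by simp)
    have ht : 0 ≤ t.sum := List.sum_nonneg (fun y hy => h y (by simp [hy]))
    have hs' : a + t.sum = 0 := by simpa using hs
    have ha0 : a = 0 := by linarith
    rcases List.mem_cons.mp hx with hx | hx
    · rw [hx]; exact ha0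
    · exact ih (fun y hy => h y (by simp [hy])) (by linarith) x hx

/-- If ν is a list of nonzero integers with Σ|νᵢ| = κ, Σνᵢ = κ and length ≥ 2,
and ν' is a list of nonzero integers with Σ|ν'ᵢ| = κ, Σν'ᵢ = -κ, length ≥ 2,
congruent entrywise to ν modulo κ, then the length is 2 and ν' = (ν₁-κ, ν₂-κ). -/
theorem congruent_plus_minus_sequences (κ : ℕ) (hκ : 1 ≤ κ) (ν ν' : List ℤ)
    (hne : ∀ x ∈ ν, x ≠ 0) (hne' : ∀ x ∈ ν', x ≠ 0)
    (habs : (ν.map (fun x => |x|)).sum = (κ : ℤ))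
    (habs' : (ν'.map (fun x => |x|)).sum = (κ : ℤ))
    (hsum : ν.sum = (κ : ℤ)) (hsum' : ν'.sum = -(κ : ℤ))
    (hlen : 2 ≤ ν.length) (hlen' : 2 ≤ ν'.length)
    (hcong : List.Forall₂ (fun a b => (κ : ℤ) ∣ (a - b)) ν ν') :
    ∃ a b : ℤ, ν = [a, b] ∧ ν' = [a - (κ : ℤ), b - (κ : ℤ)] := by
  have hleq : ν.length = ν'.length := hcong.length_eq
  set L := ν.zip ν' with hL
  have hfst : L.map Prod.fst = ν := List.map_fst_zip (le_of_eq hleq)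
  have hsnd : L.map Prod.snd = ν' := List.map_snd_zip (ge_of_eq hleq)
  have hmem : ∀ p ∈ L, p.1 ∈ ν ∧ p.2 ∈ ν' := fun p hp => List.of_mem_zip hp
  have hdvd : ∀ p ∈ L, (κ : ℤ) ∣ p.1 - p.2 := by
    intro p hp
    rw [List.forall₂_iff_zip] at hcong
    obtain ⟨x, y⟩ := p
    exact hcong.2 hp
  -- sum of diffs = 2κ
  have hsumd : (L.map (fun p => p.1 - p.2)).sum = 2 * κ := by
    rw [sum_map_sub' Prod.fst Prod.snd L, hfst, hsnd, hsum, hsum']; ring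
  -- sum of |·.1| + |·.2| = 2κ
  have hsumabs : (L.map (fun p => |p.1| + |p.2|)).sum = 2 * κ := by
    have : (L.map (fun p => |p.1| + |p.2| - 0)).sum
        = (L.map (fun p => |p.1| + |p.2|)).sum - (L.map (fun _ => (0:ℤ))).sum :=
      sum_map_sub' _ _ L
    have h1 : (L.map (fun p => |p.1| + |p.2|)).sum
        = (L.map (fun p => |p.1|)).sum + (L.map (fun p => |p.2|)).sum := by
      induction L with
      | nil => simp
      | cons a t ih => simp only [List.map_cons, List.sum_cons, ih]; ring
    have hA : (L.map (fun p => |p.1|)).sum = (κ : ℤ) := by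
      rw [show (L.map fun p : ℤ × ℤ => |p.1|) = (L.map Prod.fst).map (fun x => |x|) by
        simp [List.map_map, Function.comp]]
      rw [hfst]; exact habs
    have hB : (L.map (fun p => |p.2|)).sum = (κ : ℤ) := by
      rw [show (L.map fun p : ℤ × ℤ => |p.2|) = (L.map Prod.snd).map (fun x => |x|) by
        simp [List.map_map, Function.comp]]
      rw [hsnd]; exact habs'
    rw [h1, hA, hB]; ring
  -- Σ d ≤ Σ |d| ≤ Σ (|a|+|b|)
  have hle1 : (L.map (fun p => p.1 - p.2)).sum ≤ (L.map (fun p => |p.1 - p.2|)).sum :=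
    List.sum_le_sum (fun p _ => le_abs_self _)
  have hle2 : (L.map (fun p => |p.1 - p.2|)).sum ≤ (L.map (fun p => |p.1| + |p.2|)).sum :=
    List.sum_le_sum (fun p _ => abs_sub _ _)
  have heqabs : (L.map (fun p => |p.1 - p.2|)).sum = 2 * κ := by
    rw [hsumd] at hle1; rw [hsumabs] at hle2; linarith
  -- pointwise: d = |a|+|b|
  have hpt : ∀ p ∈ L, p.1 - p.2 = |p.1| + |p.2| := by
    have hz1 : ∀ x ∈ L.map (fun p => |p.1 - p.2| - (p.1 - p.2)), x = 0 := by
      apply all_zero_of_sum_zero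
      · intro x hx
        simp only [List.mem_map] at hx
        obtain ⟨p, _, rfl⟩ := hx
        linarith [le_abs_self (p.1 - p.2)]
      · rw [sum_map_sub' _ _ L, heqabs, hsumd]; ring
    have hz2 : ∀ x ∈ L.map (fun p => (|p.1| + |p.2|) - |p.1 - p.2|), x = 0 := by
      apply all_zero_of_sum_zero
      · intro x hx
        simp only [List.mem_map] at hx
        obtain ⟨p, _, rfl⟩ := hx
        linarith [abs_sub p.1 p.2]
      · rw [sum_map_sub' _ _ L, heqabs, hsumabs]; ring
    intro p hp
    have h1 := hz1 _ (List.mem_map_of_mem hp)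
    have h2 := hz2 _ (List.mem_map_of_mem hp)
    linarith
  -- pointwise: d ≥ κ
  have hge : ∀ p ∈ L, (κ : ℤ) ≤ p.1 - p.2 := by
    intro p hp
    have h1 : 1 ≤ |p.1| := Int.one_le_abs (hne _ (hmem p hp).1)
    have h2 : 1 ≤ |p.2| := Int.one_le_abs (hne' _ (hmem p hp).2)
    have hpos : 0 < p.1 - p.2 := by
      rw [hpt p hp]; linarith
    exact Int.le_of_dvd hpos (hdvd p hp)
  -- length ≤ 2
  have hLlen : L.length = ν.length := by
    rw [hL, List.length_zip, hleq, min_self]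
  have hnsmul : ν.length • (κ : ℤ) ≤ 2 * κ := by
    have := List.card_nsmul_le_sum (l := L.map (fun p => p.1 - p.2)) (n := (κ : ℤ))
      (fun x hx => by
        simp only [List.mem_map] at hx
        obtain ⟨p, hp, rfl⟩ := hx
        exact hge p hp)
    rwa [List.length_map, hLlen, hsumd] at this
  have hlen2 : ν.length = 2 := by
    by_contra h
    have h3 : 3 ≤ ν.length := by omega
    have : (3 : ℤ) * κ ≤ ν.length • (κ : ℤ) := by
      rw [nsmul_eq_mul]
      have : (3 : ℤ) ≤ (ν.length : ℤ) := by exact_mod_cast h3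
      have hκ' : (1 : ℤ) ≤ κ := by exact_mod_cast hκ
      nlinarith
    have hκ' : (1 : ℤ) ≤ κ := by exact_mod_cast hκ
    linarith
  obtain ⟨a, b, rfl⟩ := List.length_eq_two.mp hlen2
  have hlen2' : ν'.length = 2 := by omega
  obtain ⟨a', b', rfl⟩ := List.length_eq_two.mp hlen2'
  have hpa : (κ : ℤ) ≤ a - a' := hge (a, a') (by simp [hL])
  have hpb : (κ : ℤ) ≤ b - b' := hge (b, b') (by simp [hL])
  have hsum2 : (a - a') + (b - b') = 2 * κ := by
    simp at hsum hsum'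
    linarith
  have ha' : a' = a - κ := by linarith
  have hb' : b' = b - κ := by linarith
  exact ⟨a, b, rfl, by rw [ha', hb']⟩
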